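/- arXiv:2010.06643 — 2 statements merged into one kernel-verified Lean document; each statement's English description precedes it below -/
import Mathlib

section
/- For all integers n, x, y with 1 ≤ y ≤ x ≤ n − 1, the number of bitstrings of length n that start with the bit 0, have exactly x 0s, and have maxrun exactly y equals Σ_{i=1}^{y−1} F_{n−i−1}(x−i, y) + Σ_{j=0}^{y} F_{n−y−1}(x−y, j). -/
/-- Number of 0s in a bitstring (`false` represents 0, `true` represents 1). -/
def zeros (s : List Bool) : ℕ := s.count false

/-- Length of the longest run of consecutive 0s in a bitstring
(0 if the string has no 0s). -/
def maxrun (s : List Bool) : ℕ := ((s.splitOn true).map List.length).foldr max 0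


/-- `F n x y` is the number of bitstrings of length `n` with exactly `x` 0s
and longest run of 0s exactly `y`. -/
noncomputable def F (n x y : ℕ) : ℕ :=
  Nat.card {s : List Bool // s.length = n ∧ zeros s = x ∧ maxrun s = y}


lemma finite_cond (n : ℕ) (P : List Bool → Prop) : Finite {s : List Bool // s.length = n ∧ P s} := by
  have h : {s : List Bool | s.length = n ∧ P s}.Finite :=
    (List.finite_length_eq Bool n).subset (fun s hs => hs.1)
  exact h.to_subtype

lemma nat_card_sigma {ι : Type} [Fintype ι] (f : ι → Type) [∀ i, Finite (f i)] :
    Nat.card ((i : ι) × f i) = ∑ i, Nat.card (f i) := by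
  letI : ∀ i, Fintype (f i) := fun i => Fintype.ofFinite (f i)
  simp [Nat.card_eq_fintype_card, Fintype.card_sigma]

lemma repl_head (i : ℕ) (hi : 1 ≤ i) (l : List Bool) :
    (List.replicate i false ++ l).head? = some false := by
  cases i with
  | zero => omega
  | succ k => simp [List.replicate_succ]

lemma splitOn_repl (i : ℕ) (t : List Bool) :
    (List.replicate i false ++ true :: t).splitOn true
      = List.replicate i false :: t.splitOn true := by
  apply List.splitOnP_first
  · intro x hx
    simp [List.eq_of_mem_replicate hx]
  · simp

lemma maxrun_decomp (i : ℕ) (t : List Bool) :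
    maxrun (List.replicate i false ++ true :: t) = max i (maxrun t) := by
  unfold maxrun
  rw [splitOn_repl]
  simp

lemma zeros_decomp (i : ℕ) (t : List Bool) :
    zeros (List.replicate i false ++ true :: t) = i + zeros t := by
  simp [zeros]

lemma exists_decomp : ∀ s : List Bool, s.head? = some false → s.count false < s.length →
    ∃ i t, 1 ≤ i ∧ s = List.replicate i false ++ true :: t := by
  intro s
  induction s with
  | nil => simp
  | cons a rest ih =>
    intro h1 h2
    simp only [List.head?_cons, Option.some.injEq] at h1
    subst h1
    cases rest with
    | nil => simp at h2
    | cons b t' =>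
      cases b with
      | false =>
        obtain ⟨i, t, hi, ht⟩ := ih (by simp) (by simpa [List.count_cons] using h2)
        exact ⟨i + 1, t, by omega, by simp [List.replicate_succ, ← ht]⟩
      | true => exact ⟨1, t', le_refl 1, by simp [List.replicate]⟩

lemma decomp_inj : ∀ (i i' : ℕ) (t t' : List Bool),
    List.replicate i false ++ true :: t = List.replicate i' false ++ true :: t' →
    i = i' ∧ t = t' := by
  intro i
  induction i with
  | zero =>
    intro i' t t' h
    cases i' with
    | zero => simpa using h
    | succ k => simp [List.replicate_succ] at h
  | succ k ih =>
    intro i' t t' h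
    cases i' with
    | zero => simp [List.replicate_succ] at h
    | succ k' =>
      simp only [List.replicate_succ, List.cons_append, List.cons.injEq, true_and] at h
      obtain ⟨h1, h2⟩ := ih k' t t' h
      exact ⟨by omega, h2⟩

theorem F_startZero_recurrence (n x y : ℕ) (hy : 1 ≤ y) (hyx : y ≤ x) (hx : x ≤ n - 1) :
    Nat.card {s : List Bool // s.length = n ∧ s.head? = some false ∧
        zeros s = x ∧ maxrun s = y}
      = (∑ i ∈ Finset.Icc 1 (y - 1), F (n - i - 1) (x - i) y)
        + ∑ j ∈ Finset.range (y + 1), F (n - y - 1) (x - y) j := by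
  have hxn : x + 1 ≤ n := by omega
  haveI hFA : ∀ i : ↥(Finset.Icc 1 (y - 1)),
      Finite {s : List Bool // s.length = n - ↑i - 1 ∧ zeros s = x - ↑i ∧ maxrun s = y} :=
    fun i => finite_cond _ _
  haveI hFB : ∀ j : ↥(Finset.range (y + 1)),
      Finite {s : List Bool // s.length = n - y - 1 ∧ zeros s = x - y ∧ maxrun s = ↑j} :=
    fun j => finite_cond _ _
  haveI hFS : Finite {s : List Bool // s.length = n ∧ s.head? = some false ∧
      zeros s = x ∧ maxrun s = y} := finite_cond _ _
  let A : Type := (i : ↥(Finset.Icc 1 (y - 1))) ×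
      {s : List Bool // s.length = n - ↑i - 1 ∧ zeros s = x - ↑i ∧ maxrun s = y}
  let B : Type := (j : ↥(Finset.range (y + 1))) ×
      {s : List Bool // s.length = n - y - 1 ∧ zeros s = x - y ∧ maxrun s = ↑j}
  let f : A ⊕ B → {s : List Bool // s.length = n ∧ s.head? = some false ∧
      zeros s = x ∧ maxrun s = y} := fun p =>
    match p with
    | Sum.inl ⟨i, t⟩ =>
        ⟨List.replicate (↑i : ℕ) false ++ true :: t.1, by
          have hi := Finset.mem_Icc.mp i.2
          obtain ⟨hl, hz, hm⟩ := t.2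
          refine ⟨by simp; omega, repl_head _ hi.1 _, ?_, ?_⟩
          · rw [zeros_decomp, hz]; omega
          · rw [maxrun_decomp, hm]; omega⟩
    | Sum.inr ⟨j, t⟩ =>
        ⟨List.replicate y false ++ true :: t.1, by
          have hj := Finset.mem_range.mp j.2
          obtain ⟨hl, hz, hm⟩ := t.2
          refine ⟨by simp; omega, repl_head _ hy _, ?_, ?_⟩
          · rw [zeros_decomp, hz]; omega
          · rw [maxrun_decomp, hm]; omega⟩
  have hinj : Function.Injective f := by
    rintro (⟨⟨i, hi⟩, ⟨t, ht⟩⟩ | ⟨⟨j, hj⟩, ⟨t, ht⟩⟩) (⟨⟨i', hi'⟩, ⟨t', ht'⟩⟩ | ⟨⟨j', hj'⟩, ⟨t', ht'⟩⟩) h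
    · have h' : List.replicate i false ++ true :: t
          = List.replicate i' false ++ true :: t' := congrArg Subtype.val h
      obtain ⟨h1, h2⟩ := decomp_inj _ _ _ _ h'
      subst h1; subst h2; rfl
    · have h' : List.replicate i false ++ true :: t
          = List.replicate y false ++ true :: t' := congrArg Subtype.val h
      obtain ⟨h1, -⟩ := decomp_inj _ _ _ _ h'
      have := Finset.mem_Icc.mp hi
      omega
    · have h' : List.replicate y false ++ true :: t
          = List.replicate i' false ++ true :: t' := congrArg Subtype.val h
      obtain ⟨h1, -⟩ := decomp_inj _ _ _ _ h'
      have := Finset.mem_Icc.mp hi'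
      omega
    · have h' : List.replicate y false ++ true :: t
          = List.replicate y false ++ true :: t' := congrArg Subtype.val h
      obtain ⟨-, h2⟩ := decomp_inj _ _ _ _ h'
      subst h2
      have hjj : j = j' := ht.2.2.symm.trans ht'.2.2
      subst hjj; rfl
  have hsurj : Function.Surjective f := by
    rintro ⟨s, hlen, hhead, hz, hm⟩
    have hcount : s.count false < s.length := by
      rw [hlen]
      show zeros s < n
      omega
    obtain ⟨i, t, hi1, rfl⟩ := exists_decomp s hhead hcount
    rw [maxrun_decomp] at hm
    rw [zeros_decomp] at hz
    simp only [List.length_append, List.length_replicate, List.length_cons] at hlen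
    have hiy : i ≤ y := by
      have := le_max_left i (maxrun t)
      omega
    by_cases hcase : i = y
    · have hmt : maxrun t ≤ y := by
        have := le_max_right i (maxrun t)
        omega
      refine ⟨Sum.inr ⟨⟨maxrun t, Finset.mem_range.mpr (by omega)⟩,
        ⟨t, show t.length = n - y - 1 by omega, show zeros t = x - y by omega, rfl⟩⟩,
        Subtype.ext ?_⟩
      show List.replicate y false ++ true :: t = List.replicate i false ++ true :: t
      rw [hcase]
    · have hmt : maxrun t = y := by
        rcases Nat.le_total i (maxrun t) with h | h
        · rwa [Nat.max_eq_right h] at hm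
        · rw [Nat.max_eq_left h] at hm; omega
      exact ⟨Sum.inl ⟨⟨i, Finset.mem_Icc.mpr ⟨hi1, by omega⟩⟩,
        ⟨t, show t.length = n - i - 1 by omega, show zeros t = x - i by omega, hmt⟩⟩, rfl⟩
  have hcard : Nat.card {s : List Bool // s.length = n ∧ s.head? = some false ∧
      zeros s = x ∧ maxrun s = y} = Nat.card (A ⊕ B) :=
    (Nat.card_congr (Equiv.ofBijective f ⟨hinj, hsurj⟩)).symm
  rw [hcard, Nat.card_sum, nat_card_sigma, nat_card_sigma]
  congr 1
  · rw [← Finset.sum_coe_sort (Finset.Icc 1 (y - 1)) (fun i => F (n - i - 1) (x - i) y)]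
    exact Finset.sum_congr rfl (fun i _ => rfl)
  · rw [← Finset.sum_coe_sort (Finset.range (y + 1)) (fun j => F (n - y - 1) (x - y) j)]
    exact Finset.sum_congr rfl (fun j _ => rfl)
end

section
/- For all integers n, x, y with 1 ≤ y ≤ x, 2 ≤ x ≤ n − 2, the count P_n(x,y) satisfies the recurrence P_n(x,y) = Σ_{i=0}^{y−1} P_{n−i−1}(x−i, y) + Σ_{j=0}^{y} P_{n−y−1}(x−y, j). -/
/-- A bitstring is pinned if it is nonempty and both its first and last bits are 0. -/
def Pinned (s : List Bool) : Prop :=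
  s ≠ [] ∧ s.head? = some false ∧ s.getLast? = some false

/-- `P n x y` is the number of pinned bitstrings of length `n` with exactly `x` 0s
and longest run of 0s exactly `y`. -/
noncomputable def P (n x y : ℕ) : ℕ :=
  Nat.card {s : List Bool // s.length = n ∧ Pinned s ∧ zeros s = x ∧ maxrun s = y}

/-! ### Auxiliary material -/

section Aux

instance : DecidablePred Pinned := fun s => by unfold Pinned; infer_instance

lemma splitOn_true_cons (t : List Bool) : (true :: t).splitOn true = [] :: t.splitOn true := by
  simp [List.splitOn, List.splitOnP_cons]

lemma splitOn_rep (a : ℕ) (t : List Bool) :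
    (List.replicate a false ++ true :: t).splitOn true
      = List.replicate a false :: t.splitOn true := by
  simpa [List.splitOn] using List.splitOnP_first (p := (· == true)) (xs := List.replicate a false)
    (by intro x hx; simp [List.eq_of_mem_replicate hx]) true rfl t

lemma maxrun_true_cons (t : List Bool) : maxrun (true :: t) = maxrun t := by
  simp [maxrun, splitOn_true_cons]

lemma maxrun_rep_append (a : ℕ) (t : List Bool) :
    maxrun (List.replicate a false ++ true :: t) = max a (maxrun t) := by
  simp [maxrun, splitOn_rep]

lemma zeros_rep_append (a : ℕ) (t : List Bool) :
    zeros (List.replicate a false ++ true :: t) = a + zeros t := by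
  simp [zeros, List.count_append, List.count_replicate]

/-- number of leading zeros -/
def lz (s : List Bool) : ℕ := (s.takeWhile (fun b => !b)).length

lemma lz_rep_append (a : ℕ) (t : List Bool) :
    lz (List.replicate a false ++ true :: t) = a := by
  induction a with
  | zero => simp [lz, List.takeWhile_cons]
  | succ a ih =>
    simp only [List.replicate_succ, List.cons_append, lz, List.takeWhile_cons] at *
    simpa using ih

/-- key decomposition of a bitstring containing at least one 1 -/
lemma decomp (s : List Bool) (h : zeros s < s.length) :
    s = List.replicate (lz s) false ++ true :: s.drop (lz s + 1) := by
  have hsplit := (List.takeWhile_append_dropWhile (p := fun b => !b) (l := s)).symm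
  have htw : s.takeWhile (fun b => !b) = List.replicate (lz s) false := by
    rw [List.eq_replicate_iff]
    refine ⟨rfl, fun b hb => ?_⟩
    have := List.mem_takeWhile_imp hb
    simpa using this
  have hdw : s.dropWhile (fun b => !b) ≠ [] := by
    intro hnil
    have : s.takeWhile (fun b => !b) = s := by
      have := List.takeWhile_append_dropWhile (p := fun b => !b) (l := s)
      simpa [hnil] using this
    have hall : ∀ b ∈ s, b = false := by
      intro b hb
      have := List.mem_takeWhile_imp (this ▸ hb)
      simpa using this
    have : zeros s = s.length := by
      simpa [zeros] using List.count_eq_length.2 (by intro b hb; simpa using (hall b hb).symm)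
    omega
  obtain ⟨c, u, hcu⟩ := List.exists_cons_of_ne_nil hdw
  have hc : c = true := by
    have := List.head_dropWhile_not (p := fun b => !b) (l := s) hdw
    simp [hcu] at this
    simpa using this
  have hdrop : s.drop (lz s) = s.dropWhile (fun b => !b) := by
    have h2 := List.drop_left (l₁ := List.takeWhile (fun b => !b) s) (l₂ := List.dropWhile (fun b => !b) s)
    rw [← hsplit] at h2
    exact h2
  have : s.drop (lz s + 1) = u := by
    rw [← List.drop_drop, hdrop, hcu, hc]
    simp
  rw [this]
  conv_lhs => rw [hsplit]
  rw [htw, hcu, hc]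

lemma getLast?_cons_ne (b : Bool) {t : List Bool} (ht : t ≠ []) :
    (b :: t).getLast? = t.getLast? := by
  cases t with
  | nil => exact absurd rfl ht
  | cons c u => exact List.getLast?_cons_cons

lemma zeros_pos {t : List Bool} (h : t.getLast? = some false) : 0 < zeros t :=
  List.count_pos_iff.2 (List.mem_of_getLast? h)

lemma getLast?_rep_append (a : ℕ) {t : List Bool} (ht : t ≠ []) :
    (List.replicate a false ++ true :: t).getLast? = t.getLast? := by
  rw [List.getLast?_append, getLast?_cons_ne true ht]
  cases t with
  | nil => exact absurd rfl ht
  | cons c u => simp [List.getLast?_cons]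

/-- all bool lists of length n -/
def allB (n : ℕ) : Finset (List Bool) :=
  (Finset.univ : Finset (Fin n → Bool)).image List.ofFn

lemma mem_allB {n : ℕ} {s : List Bool} : s ∈ allB n ↔ s.length = n := by
  constructor
  · rintro h
    simp only [allB, Finset.mem_image] at h
    obtain ⟨f, -, rfl⟩ := h
    simp
  · intro h
    simp only [allB, Finset.mem_image]
    refine ⟨fun i => s.get (Fin.cast h.symm i), Finset.mem_univ _, ?_⟩
    apply List.ext_get (by simp [h])
    intro i h1 h2
    simp

/-- pinned count as a Finset card -/
def PC (n x y : ℕ) : ℕ :=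
  ((allB n).filter (fun s => Pinned s ∧ zeros s = x ∧ maxrun s = y)).card

lemma P_eq_PC (n x y : ℕ) : P n x y = PC n x y := by
  rw [P, PC]
  rw [Nat.card_congr (Equiv.subtypeEquivRight (q := fun s =>
      s ∈ (allB n).filter (fun s => Pinned s ∧ zeros s = x ∧ maxrun s = y)) ?_)]
  · exact Nat.card_eq_finsetCard _
  · intro s
    simp [Finset.mem_filter, mem_allB, and_assoc]

/-- count of length-n strings ending in 0 with given zeros and maxrun -/
def R (n z w : ℕ) : ℕ :=
  ((allB n).filter (fun s => s.getLast? = some false ∧ zeros s = z ∧ maxrun s = w)).card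

lemma R_succ (m z w : ℕ) : R (m + 1) z w = PC (m + 1) z w + R m z w := by
  classical
  rw [R, ← Finset.card_filter_add_card_filter_not
    (p := fun s : List Bool => s.head? = some false)]
  congr 1
  · -- head false part = PC
    rw [PC]
    rw [Finset.filter_filter]
    apply congrArg Finset.card
    ext s
    simp only [Finset.mem_filter, mem_allB]
    simp only [Pinned]
    constructor
    · rintro ⟨h1, ⟨h2, h3, h4⟩, h5⟩
      exact ⟨h1, ⟨fun h => by simp [h] at h1, h5, h2⟩, h3, h4⟩
    · rintro ⟨h1, ⟨h2, h3, h4⟩, h5, h6⟩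
      exact ⟨h1, ⟨h4, h5, h6⟩, h3⟩
  · -- head true part = R m
    rw [Finset.filter_filter, R]
    refine Finset.card_bij' (fun s _ => s.tail) (fun t _ => true :: t) ?_ ?_ ?_ ?_
    · intro s hs
      simp only [Finset.mem_filter, mem_allB] at hs ⊢
      obtain ⟨h1, ⟨h2, h3, h4⟩, h5⟩ := hs
      obtain ⟨b, t, rfl⟩ : ∃ b t, s = b :: t := by
        cases s with
        | nil => simp at h1
        | cons b t => exact ⟨b, t, rfl⟩
      have hb : b = true := by
        cases b
        · simp at h5
        · rfl
      subst hb
      have ht : t ≠ [] := by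
        rintro rfl
        simp at h2
      refine ⟨by simpa using h1, ?_, by simpa [zeros] using h3,
        by rw [← maxrun_true_cons]; exact h4⟩
      rwa [getLast?_cons_ne true ht] at h2
    · intro t ht
      simp only [Finset.mem_filter, mem_allB] at ht ⊢
      obtain ⟨h1, h2, h3, h4⟩ := ht
      have ht' : t ≠ [] := by
        rintro rfl
        simp at h2
      refine ⟨by simpa using h1, ⟨?_, by simpa [zeros] using h3,
        by rw [maxrun_true_cons]; exact h4⟩, by simp⟩
      rwa [getLast?_cons_ne true ht']
    · intro s hs
      simp only [Finset.mem_filter, mem_allB] at hs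
      cases s with
      | nil => simp at hs
      | cons b t =>
        have : b = true := by
          have := hs.2.2
          cases b
          · simp at this
          · rfl
        subst this; rfl
    · intro t _; rfl

lemma lemA (m z y : ℕ) (hy : 1 ≤ y) (hzm : z < m) :
    PC m z y = (∑ i ∈ Finset.range (y - 1), R (m - i - 2) (z - i - 1) y)
      + ∑ j ∈ Finset.range (y + 1), R (m - y - 1) (z - y) j := by
  classical
  obtain ⟨k, rfl⟩ : ∃ k, y = k + 1 := ⟨y - 1, by omega⟩
  set y := k + 1 with hydef
  set S := (allB m).filter (fun s => Pinned s ∧ zeros s = z ∧ maxrun s = y) with hS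
  have hmem : ∀ s ∈ S, s.length = m ∧ Pinned s ∧ zeros s = z ∧ maxrun s = y := by
    intro s hs
    simp only [hS, Finset.mem_filter, mem_allB] at hs
    exact hs
  have hdec : ∀ s ∈ S, s = List.replicate (lz s) false ++ true :: s.drop (lz s + 1) := by
    intro s hs
    obtain ⟨h1, h2, h3, h4⟩ := hmem s hs
    exact decomp s (by rw [h3, h1]; exact hzm)
  have hlzle : ∀ s ∈ S, lz s ≤ y := by
    intro s hs
    obtain ⟨h1, h2, h3, h4⟩ := hmem s hs
    have := maxrun_rep_append (lz s) (s.drop (lz s + 1))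
    rw [← hdec s hs, h4] at this
    omega
  have hfib : S.card = ∑ a ∈ Finset.range (y + 1), (S.filter (fun s => lz s = a)).card :=
    Finset.card_eq_sum_card_fiberwise (fun s hs => Finset.mem_range.2 (by
      have := hlzle s hs; omega))
  have key : ∀ a, 1 ≤ a → a ≤ y → (S.filter (fun s => lz s = a)).card
      = ((allB (m - a - 1)).filter (fun t => t.getLast? = some false ∧ zeros t = z - a
          ∧ max a (maxrun t) = y)).card := by
    intro a ha1 hay
    refine Finset.card_bij' (fun s _ => s.drop (a + 1))
      (fun t _ => List.replicate a false ++ true :: t) ?_ ?_ ?_ ?_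
    · intro s hs'
      obtain ⟨hs, hlz⟩ := Finset.mem_filter.1 hs'
      obtain ⟨h1, ⟨hne, hhd, hlast⟩, h3, h4⟩ := hmem s hs
      have hd := hdec s hs
      rw [hlz] at hd
      set u := s.drop (a + 1) with hu
      have hlen : s.length = a + 1 + u.length := by
        conv_lhs => rw [hd]
        simp
        omega
      have hune : u ≠ [] := by
        rintro hu0
        rw [hu0] at hd
        rw [hd] at hlast
        rw [show List.replicate a false ++ [true] = List.replicate a false ++ [true] from rfl,
          List.getLast?_concat] at hlast
        simp at hlast
      have hlastu : u.getLast? = some false := by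
        rw [hd, getLast?_rep_append a hune] at hlast
        exact hlast
      have hzu : zeros s = a + zeros u := by rw [hd]; exact zeros_rep_append a u
      have hmru : maxrun s = max a (maxrun u) := by rw [hd]; exact maxrun_rep_append a u
      simp only [Finset.mem_filter, mem_allB]
      exact ⟨by omega, hlastu, by omega, by rw [← hmru, h4]⟩
    · intro t ht'
      simp only [Finset.mem_filter, mem_allB] at ht'
      obtain ⟨hlen, hlast, hz, hmr⟩ := ht'
      have htne : t ≠ [] := by rintro rfl; simp at hlast
      have hzt : 0 < zeros t := zeros_pos hlast
      have haz : a < z := by omega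
      simp only [Finset.mem_filter, mem_allB, hS]
      refine ⟨⟨?_, ⟨?_, ?_, ?_⟩, ?_, ?_⟩, lz_rep_append a t⟩
      · simp [hlen]; omega
      · simp
      · obtain ⟨a', rfl⟩ : ∃ a', a = a' + 1 := ⟨a - 1, by omega⟩
        rw [List.replicate_succ]
        simp
      · rw [getLast?_rep_append a htne]; exact hlast
      · rw [zeros_rep_append]; omega
      · rw [maxrun_rep_append]; exact hmr
    · intro s hs'
      obtain ⟨hs, hlz⟩ := Finset.mem_filter.1 hs'
      have := (hdec s hs).symm
      rwa [hlz] at this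
    · intro t ht
      show List.drop (a + 1) (List.replicate a false ++ true :: t) = t
      rw [show List.replicate a false ++ true :: t
        = (List.replicate a false ++ [true]) ++ t by simp]
      exact List.drop_left' (by simp)
  have hfib0 : (S.filter (fun s => lz s = 0)).card = 0 := by
    rw [Finset.card_eq_zero, Finset.filter_eq_empty_iff]
    intro s hs
    obtain ⟨h1, ⟨hne, hhd, hlast⟩, h3, h4⟩ := hmem s hs
    obtain ⟨b, u, rfl⟩ := List.exists_cons_of_ne_nil hne
    have hb : b = false := by simpa using hhd
    subst hb
    simp [lz, List.takeWhile_cons]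
  have htop : (S.filter (fun s => lz s = y)).card
      = ∑ j ∈ Finset.range (y + 1), R (m - y - 1) (z - y) j := by
    rw [key y hy le_rfl]
    rw [Finset.card_eq_sum_card_fiberwise (f := maxrun) (t := Finset.range (y + 1))
      (fun t ht => by
        simp only [Finset.mem_coe, Finset.mem_filter] at ht
        exact Finset.mem_range.2 (by omega))]
    refine Finset.sum_congr rfl fun j hj => ?_
    have hjy : j ≤ y := by simpa using Nat.lt_succ_iff.1 (Finset.mem_range.1 hj)
    rw [R]
    apply congrArg Finset.card
    ext t
    simp only [Finset.mem_filter, mem_allB]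
    constructor
    · rintro ⟨⟨h1, h2, h3, h4⟩, h5⟩
      exact ⟨h1, h2, h3, h5⟩
    · rintro ⟨h1, h2, h3, h5⟩
      exact ⟨⟨h1, h2, h3, by omega⟩, h5⟩
  have hmid : ∀ i < k, (S.filter (fun s => lz s = i + 1)).card = R (m - i - 2) (z - i - 1) y := by
    intro i hik
    rw [key (i + 1) (by omega) (by omega)]
    rw [R]
    apply congrArg Finset.card
    ext t
    simp only [Finset.mem_filter, mem_allB]
    have e1 : m - (i + 1) - 1 = m - i - 2 := by omega
    have e2 : z - (i + 1) = z - i - 1 := by omega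
    rw [e1, e2]
    constructor
    · rintro ⟨h1, h2, h3, h4⟩
      exact ⟨h1, h2, h3, by omega⟩
    · rintro ⟨h1, h2, h3, h4⟩
      exact ⟨h1, h2, h3, by omega⟩
  have : PC m z y = S.card := rfl
  rw [this, hfib, Finset.sum_range_succ' _ y, hfib0, add_zero]
  have hyk : y = k + 1 := rfl
  rw [hyk, Finset.sum_range_succ, ← hyk, htop]
  congr 1
  · rw [show y - 1 = k by omega]
    exact Finset.sum_congr rfl fun i hi => hmid i (Finset.mem_range.1 hi)

end Aux

theorem P_recurrence (n x y : ℕ) (hy : 1 ≤ y) (hyx : y ≤ x) (hx2 : 2 ≤ x)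
    (hx : x ≤ n - 2) :
    P n x y = (∑ i ∈ Finset.range y, P (n - i - 1) (x - i) y)
      + ∑ j ∈ Finset.range (y + 1), P (n - y - 1) (x - y) j := by
  have hn : x + 2 ≤ n := by omega
  obtain ⟨k, rfl⟩ : ∃ k, y = k + 1 := ⟨y - 1, by omega⟩
  simp only [P_eq_PC]
  have h1 := lemA n x (k + 1) hy (by omega)
  have h2 := lemA (n - 1) x (k + 1) hy (by omega)
  rw [Nat.add_sub_cancel] at h1 h2
  have h1' : PC n x (k + 1)
      = ((∑ i ∈ Finset.range k, PC (n - i - 2) (x - i - 1) (k + 1))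
          + ∑ i ∈ Finset.range k, R (n - i - 3) (x - i - 1) (k + 1))
        + ((∑ j ∈ Finset.range (k + 2), PC (n - k - 2) (x - k - 1) j)
          + ∑ j ∈ Finset.range (k + 2), R (n - k - 3) (x - k - 1) j) := by
    rw [h1, ← Finset.sum_add_distrib, ← Finset.sum_add_distrib]
    congr 1
    · refine Finset.sum_congr rfl fun i hi => ?_
      have hik : i < k := Finset.mem_range.1 hi
      have e : n - i - 2 = (n - i - 3) + 1 := by omega
      rw [e, R_succ]
    · refine Finset.sum_congr rfl fun j hj => ?_
      rw [show n - (k + 1) - 1 = (n - k - 3) + 1 by omega, R_succ,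
        show (n - k - 3) + 1 = n - k - 2 by omega, show x - (k + 1) = x - k - 1 by omega]
  have h2' : PC (n - 1) x (k + 1)
      = (∑ i ∈ Finset.range k, R (n - i - 3) (x - i - 1) (k + 1))
        + ∑ j ∈ Finset.range (k + 2), R (n - k - 3) (x - k - 1) j := by
    rw [h2]
    congr 1
    · refine Finset.sum_congr rfl fun i hi => ?_
      rw [show n - 1 - i - 2 = n - i - 3 by omega]
    · refine Finset.sum_congr rfl fun j hj => ?_
      rw [show n - 1 - (k + 1) - 1 = n - k - 3 by omega,
        show x - (k + 1) = x - k - 1 by omega]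
  have hsplit : ∑ i ∈ Finset.range (k + 1), PC (n - i - 1) (x - i) (k + 1)
      = (∑ i ∈ Finset.range k, PC (n - i - 2) (x - i - 1) (k + 1))
        + PC (n - 1) x (k + 1) := by
    rw [Finset.sum_range_succ' (fun i => PC (n - i - 1) (x - i) (k + 1)) k]
    simp only [Nat.sub_zero]
    congr 1

  have hsum2 : ∑ j ∈ Finset.range (k + 1 + 1), PC (n - (k + 1) - 1) (x - (k + 1)) j
      = ∑ j ∈ Finset.range (k + 2), PC (n - k - 2) (x - k - 1) j := by
    refine Finset.sum_congr rfl fun j hj => ?_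
    rw [show n - (k + 1) - 1 = n - k - 2 by omega, show x - (k + 1) = x - k - 1 by omega]
  rw [hsplit, hsum2, h1', h2']
  omega
end
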